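/- Let Z ⊂ ℙ^n be the set of C(δ+n, n) points obtained as the n-fold intersection points of δ+n general hyperplanes H_1, …, H_{δ+n} (δ ≥ 1). Then there is no nonzero homogeneous polynomial of degree d ≤ δ vanishing on all of Z, i.e., H^0(I_Z(d)) = 0 for d ≤ δ. -/

import Mathlib

open MvPolynomial

/-- The linear form with coefficient vector `c`, as a polynomial. -/
noncomputable def linForm {n : ℕ} (c : Fin n → ℂ) : MvPolynomial (Fin n) ℂ :=
  ∑ i, MvPolynomial.C (c i) * MvPolynomial.X i


/-- the dot functional as a linear map in the first argument -/
noncomputable def dotF {N : ℕ} (x : Fin N → ℂ) : (Fin N → ℂ) →ₗ[ℂ] ℂ where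
  toFun v := ∑ j, v j * x j
  map_add' a b := by simp [add_mul, Finset.sum_add_distrib]
  map_smul' r a := by simp [Finset.mul_sum, mul_assoc]

/-- linearly independent N vectors in ℂ^N with all dots vanishing forces x = 0 -/
lemma eq_zero_of_forall_dot {N : ℕ} {ι : Type*} (v : ι → Fin N → ℂ) (s : Finset ι)
    (hcard : s.card = N) (hli : LinearIndependent ℂ (fun i : s => v i))
    (x : Fin N → ℂ) (hx : ∀ i ∈ s, ∑ j, v i j * x j = 0) : x = 0 := by
  rcases Nat.eq_zero_or_pos N with hN | hN
  · subst hN; funext k; exact k.elim0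
  have hne : Nonempty s := by
    rw [Finset.nonempty_coe_sort]
    exact Finset.card_pos.mp (hcard ▸ hN)
  have hcard' : Fintype.card s = Module.finrank ℂ (Fin N → ℂ) := by
    simp [hcard, Module.finrank_pi]
  let B := basisOfLinearIndependentOfCardEqFinrank hli hcard'
  have hB : ∀ i : s, B i = v i := fun i => by
    simp only [B, coe_basisOfLinearIndependentOfCardEqFinrank]
  have hzero : dotF x = 0 := by
    apply B.ext
    intro i
    rw [hB i]
    simpa [dotF] using hx i i.2
  funext k
  have := congrArg (fun f => f (Pi.single k 1)) hzero
  simpa [dotF, Pi.single_apply] using this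

/-- fewer than N+1 linear forms have a common nonzero zero -/
lemma exists_common_zero {N : ℕ} {ι : Type*} [DecidableEq ι] (v : ι → Fin (N + 1) → ℂ)
    (s : Finset ι) (hcard : s.card = N) :
    ∃ x : Fin (N + 1) → ℂ, x ≠ 0 ∧ ∀ i ∈ s, ∑ j, v i j * x j = 0 := by
  let Φ : (Fin (N + 1) → ℂ) →ₗ[ℂ] (s → ℂ) :=
    { toFun := fun x i => ∑ j, v i j * x j
      map_add' := fun a b => by funext i; simp [mul_add, Finset.sum_add_distrib]
      map_smul' := fun r a => by funext i; simp [Finset.mul_sum, mul_assoc, mul_left_comm] }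
  have : ¬ Function.Injective Φ := by
    intro hinj
    have := LinearMap.finrank_le_finrank_of_injective hinj
    simp [Module.finrank_pi, hcard] at this
  rw [← LinearMap.ker_eq_bot] at this
  obtain ⟨x, hxmem, hxne⟩ := Submodule.ne_bot_iff _ |>.mp this
  refine ⟨x, hxne, fun i hi => ?_⟩
  have := congrArg (fun f => f (⟨i, hi⟩ : s)) (LinearMap.mem_ker.mp hxmem)
  simpa [Φ] using this

/-- a functional vanishing on the kernel of a nonzero functional is a multiple of it -/
lemma exists_smul_of_dot_ker {N : ℕ} (c w : Fin N → ℂ) (k : Fin N) (hck : c k ≠ 0)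
    (hw : ∀ x : Fin N → ℂ, (∑ j, c j * x j) = 0 → ∑ j, w j * x j = 0) :
    ∃ lam : ℂ, w = lam • c := by
  classical
  set y : Fin N → ℂ := fun j => if j = k then (c k)⁻¹ else 0 with hy
  have hcy : ∑ j, c j * y j = 1 := by
    simp [hy, mul_ite, Finset.sum_ite_eq']
    field_simp
  refine ⟨∑ j, w j * y j, ?_⟩
  funext m
  set z : Fin N → ℂ := fun j => (if j = m then 1 else 0) - c m * y j with hz
  have hker : ∑ j, c j * z j = 0 := by
    simp only [hz, mul_sub, Finset.sum_sub_distrib, mul_ite, mul_one, mul_zero,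
      Finset.sum_ite_eq', Finset.mem_univ, if_true]
    rw [show ∑ j, c j * (c m * y j) = c m * ∑ j, c j * y j by
      rw [Finset.mul_sum]; exact Finset.sum_congr rfl fun j _ => by ring]
    rw [hcy]; ring
  have h1 := hw _ hker
  simp only [hz, mul_sub, Finset.sum_sub_distrib, mul_ite, mul_one, mul_zero,
    Finset.sum_ite_eq', Finset.mem_univ, if_true] at h1
  rw [show ∑ j, w j * (c m * y j) = c m * ∑ j, w j * y j by
      rw [Finset.mul_sum]; exact Finset.sum_congr rfl fun j _ => by ring] at h1
  have := sub_eq_zero.mp h1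
  simp only [Pi.smul_apply, smul_eq_mul]
  rw [this]; ring

lemma eval_linForm {n : ℕ} (c x : Fin n → ℂ) :
    MvPolynomial.eval x (linForm c) = ∑ i, c i * x i := by simp [linForm]

lemma linForm_isHomogeneous {n : ℕ} (c : Fin n → ℂ) : (linForm c).IsHomogeneous 1 :=
  MvPolynomial.IsHomogeneous.sum _ _ _ fun _ _ => MvPolynomial.isHomogeneous_C_mul_X _ _

lemma eval_aeval' {k l : ℕ} (g : Fin k → MvPolynomial (Fin l) ℂ) (x : Fin l → ℂ)
    (P : MvPolynomial (Fin k) ℂ) :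
    MvPolynomial.eval x (MvPolynomial.aeval g P)
      = MvPolynomial.eval (fun j => MvPolynomial.eval x (g j)) P := by
  have : (MvPolynomial.eval x).comp ((MvPolynomial.aeval g : MvPolynomial (Fin k) ℂ →ₐ[ℂ] MvPolynomial (Fin l) ℂ) : MvPolynomial (Fin k) ℂ →+* MvPolynomial (Fin l) ℂ)
      = MvPolynomial.eval (fun j => MvPolynomial.eval x (g j)) := by
    apply MvPolynomial.ringHom_ext <;> simp
  exact RingHom.congr_fun this P

lemma factor_out_linForm {N : ℕ} (c : Fin N → ℂ) (j : Fin N) (hcj : c j ≠ 0) (d : ℕ)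
    (P : MvPolynomial (Fin N) ℂ) (hP : P.IsHomogeneous (d + 1))
    (hvan : ∀ x : Fin N → ℂ, (∑ i, c i * x i) = 0 → MvPolynomial.eval x P = 0) :
    ∃ Q : MvPolynomial (Fin N) ℂ, Q.IsHomogeneous d ∧ P = linForm c * Q := by
  classical
  set E : MvPolynomial (Fin N) ℂ := ∑ i ∈ Finset.univ.erase j, C (c i) * X i with hE
  set s : Fin N → MvPolynomial (Fin N) ℂ := fun i =>
    if i = j then C (c j)⁻¹ * (X j - E) else X i with hs
  set t : Fin N → MvPolynomial (Fin N) ℂ := fun i =>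
    if i = j then linForm c else X i with ht
  have hlf : linForm c = C (c j) * X j + E := by
    rw [linForm, hE, ← Finset.add_sum_erase _ _ (Finset.mem_univ j)]
  have haeE : ∀ (u : Fin N → MvPolynomial (Fin N) ℂ), (∀ i, i ≠ j → u i = X i) →
      aeval u E = E := by
    intro u hu
    rw [hE, map_sum]
    refine Finset.sum_congr rfl fun i hi => ?_
    rw [map_mul, aeval_C, aeval_X, hu i (Finset.mem_erase.mp hi).1, algebraMap_eq]
  have htsj : aeval t (s j) = X j := by
    simp only [hs, if_pos rfl, map_mul, map_sub, aeval_C, aeval_X]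
    rw [haeE t (fun i hi => by simp only [ht, if_neg hi])]
    simp only [ht, if_pos rfl, hlf, algebraMap_eq]
    rw [add_sub_cancel_right, ← mul_assoc, ← C_mul, inv_mul_cancel₀ hcj, C_1, one_mul]
  have hts : ∀ i, aeval t (s i) = X i := by
    intro i
    by_cases hij : i = j
    · rw [hij]; exact htsj
    · simp [hs, ht, if_neg hij]
  have hcomp_ts : ∀ p : MvPolynomial (Fin N) ℂ, aeval t (aeval s p) = p := by
    intro p
    have h2 : (aeval t).comp (aeval s) = AlgHom.id ℂ (MvPolynomial (Fin N) ℂ) := by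
      apply algHom_ext
      intro i
      simp only [AlgHom.comp_apply, aeval_X, AlgHom.id_apply]
      exact hts i
    calc aeval t (aeval s p) = ((aeval t).comp (aeval s)) p := rfl
      _ = p := by rw [h2]; rfl
  set W := aeval s P with hW
  have hs1 : ∀ i, (s i).IsHomogeneous 1 := by
    intro i
    by_cases hij : i = j
    · rw [hij]
      simp only [hs, if_pos rfl]
      apply MvPolynomial.IsHomogeneous.C_mul
      exact (isHomogeneous_X _ _).sub
        (MvPolynomial.IsHomogeneous.sum _ _ _ fun _ _ => isHomogeneous_C_mul_X _ _)
    · simp only [hs, if_neg hij]; exact isHomogeneous_X _ _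
  have hWhom : W.IsHomogeneous (d + 1) := by
    simpa [hW, aeval_eq_bind₁] using hP.aeval s hs1
  have hWvan : ∀ x : Fin N → ℂ, x j = 0 → MvPolynomial.eval x W = 0 := by
    intro x hxj
    rw [hW, eval_aeval']
    apply hvan
    have h1 : ∀ i ∈ Finset.univ.erase j,
        c i * MvPolynomial.eval x (s i) = c i * x i := by
      intro i hi
      simp only [hs, if_neg (Finset.mem_erase.mp hi).1, eval_X]
    have h2 : MvPolynomial.eval x (s j)
        = (c j)⁻¹ * (x j - ∑ i ∈ Finset.univ.erase j, c i * x i) := by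
      simp only [hs, if_pos rfl, hE, map_mul, map_sub, eval_C, eval_X, map_sum]
    rw [← Finset.add_sum_erase _ (fun i => c i * MvPolynomial.eval x (s i))
      (Finset.mem_univ j), Finset.sum_congr rfl h1, h2,
      ← mul_assoc, mul_inv_cancel₀ hcj, one_mul, hxj]
    ring
  set D := MvPolynomial.divMonomial W (Finsupp.single j 1) with hD
  set M := MvPolynomial.modMonomial W (Finsupp.single j 1) with hM
  have hsplit : X j * D + M = W := divMonomial_add_modMonomial_single W j
  have hjM : j ∉ M.vars := by
    intro hmem
    rw [mem_vars] at hmem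
    obtain ⟨dd, hdd, hjd⟩ := hmem
    have hle : Finsupp.single j 1 ≤ dd := by
      rw [Finsupp.single_le_iff]
      exact Nat.one_le_iff_ne_zero.mpr (Finsupp.mem_support_iff.mp hjd)
    exact (MvPolynomial.mem_support_iff.mp hdd) (coeff_modMonomial_of_le W hle)
  have hMzero : M = 0 := by
    apply MvPolynomial.funext
    intro x
    have hx0j : Function.update x j 0 j = 0 := by simp
    have h1 : MvPolynomial.eval x M = MvPolynomial.eval (Function.update x j 0) M := by
      apply hom_congr_vars
      · ext a; simp
      · intro i hi _
        have hij : i ≠ j := fun h => hjM (h ▸ hi)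
        simp [Function.update_apply, if_neg hij]
      · rfl
    have h2 : MvPolynomial.eval (Function.update x j 0) W = 0 := hWvan _ hx0j
    have h3 := congrArg (MvPolynomial.eval (Function.update x j 0)) hsplit
    simp only [map_add, map_mul, eval_X, hx0j, zero_mul, zero_add, h2] at h3
    simp [h1, h3]
  have hWXD : W = X j * D := by rw [← hsplit, hMzero, add_zero]
  have hDhom : D.IsHomogeneous d := by
    intro m hm
    rw [hD, coeff_divMonomial] at hm
    have h4 := hWhom hm
    rw [map_add] at h4
    have h5 : (Finsupp.weight (1 : Fin N → ℕ)) (Finsupp.single j 1) = 1 := by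
      simp [Finsupp.weight_apply, Finsupp.sum_single_index]
    rw [h5] at h4
    omega
  have ht1 : ∀ i, (t i).IsHomogeneous 1 := by
    intro i
    by_cases hij : i = j
    · rw [hij]; simp only [ht, if_pos rfl]; exact linForm_isHomogeneous c
    · simp only [ht, if_neg hij]; exact isHomogeneous_X _ _
  refine ⟨aeval t D, by simpa [aeval_eq_bind₁] using hDhom.aeval t ht1, ?_⟩
  have h5 : P = aeval t W := (hcomp_ts P).symm
  rw [h5, hWXD, map_mul, aeval_X]
  simp only [ht, if_pos rfl]


set_option maxHeartbeats 2000000 in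
lemma key_lemma (d : ℕ) : ∀ (n δ : ℕ), d ≤ δ →
    ∀ (h : Fin (δ + n) → (Fin (n + 1) → ℂ)),
    (∀ T : Finset (Fin (δ + n)), T.card = n + 1 → LinearIndependent ℂ (fun i : T => h i)) →
    ∀ P : MvPolynomial (Fin (n + 1)) ℂ, P.IsHomogeneous d →
    (∀ x : Fin (n + 1) → ℂ, x ≠ 0 →
      (∃ L : Finset (Fin (δ + n)), L.card = n ∧
        ∀ i ∈ L, MvPolynomial.eval x (linForm (h i)) = 0) →
      MvPolynomial.eval x P = 0) →
    P = 0 := by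
  induction d with
  | zero =>
    intro n δ _ h hgen P hP hvan
    obtain ⟨L, -, hLcard⟩ := Finset.exists_subset_card_eq (s := (Finset.univ : Finset (Fin (δ + n)))) (n := n)
      (by simp)
    obtain ⟨x, hx0, hxz⟩ := exists_common_zero h L hLcard
    have hx : MvPolynomial.eval x P = 0 :=
      hvan x hx0 ⟨L, hLcard, fun i hi => by rw [eval_linForm]; exact hxz i hi⟩
    have hPC : P = C (MvPolynomial.coeff 0 P) := by
      apply MvPolynomial.ext
      intro mm
      rw [coeff_C]
      by_cases hmm : mm = 0
      · subst hmm; simp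
      · rw [if_neg fun hc => hmm hc.symm]
        exact hP.coeff_eq_zero (by
          rw [Ne, Finsupp.degree_eq_zero_iff]
          exact hmm)
    rw [hPC] at hx ⊢
    rw [eval_C] at hx
    rw [hx, map_zero]
  | succ d ih =>
    intro n
    induction n with
    | zero =>
      intro δ hdδ h hgen P hP hvan
      apply hP.eq_zero_of_forall_eval_eq_zero
      intro x
      by_cases hx : x = 0
      · subst hx
        rw [MvPolynomial.eval_zero]
        exact hP.coeff_eq_zero (by rw [map_zero]; omega)
      · exact hvan x hx ⟨∅, rfl, by simp⟩

    | succ m ihn =>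
      intro δ hdδ h hgen P hP hvan
      obtain ⟨δ', rfl⟩ : ∃ δ', δ = δ' + 1 := ⟨δ - 1, by omega⟩
      classical
      haveI : NeZero (δ' + 1 + (m + 1)) := ⟨by omega⟩
      -- `h 0 ≠ 0`
      have h0ne : h 0 ≠ 0 := by
        obtain ⟨T, hT0, hTcard⟩ := Finset.exists_superset_card_eq
          (s := ({0} : Finset (Fin (δ' + 1 + (m + 1))))) (n := m + 2)
          (by simp) (by simp; omega)
        exact (hgen T hTcard).ne_zero ⟨0, hT0 (Finset.mem_singleton_self 0)⟩
      obtain ⟨j0, hj0⟩ := Function.ne_iff.mp h0ne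
      set f0 := dotF (h 0) with hf0
      have hf0x : ∀ x : Fin (m + 2) → ℂ, f0 x = ∑ j, x j * h 0 j := fun x => rfl
      set K := LinearMap.ker f0 with hK
      have hKr : LinearMap.range f0 = ⊤ := by
        rw [LinearMap.range_eq_top]
        intro a
        refine ⟨Pi.single j0 (a / h 0 j0), ?_⟩
        rw [hf0x]
        simp [Pi.single_apply, div_mul_cancel₀ _ hj0]
      have hKrank : Module.finrank ℂ K = m + 1 := by
        have hrn := LinearMap.finrank_range_add_finrank_ker f0
        rw [hKr, ← hK] at hrn
        rw [finrank_top, Module.finrank_self, Module.finrank_pi] at hrn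
        simp only [Fintype.card_fin] at hrn
        omega
      set B : Module.Basis (Fin (m + 1)) ℂ K := Module.finBasisOfFinrankEq ℂ K hKrank with hB
      set ι : (Fin (m + 1) → ℂ) →ₗ[ℂ] (Fin (m + 2) → ℂ) :=
        K.subtype.comp (B.equivFun.symm : (Fin (m + 1) → ℂ) ≃ₗ[ℂ] K).toLinearMap with hι
      have hι_apply : ∀ y, ι y = ((B.equivFun.symm y : K) : Fin (m + 2) → ℂ) :=
        fun y => rfl
      have hι_inj : Function.Injective ι := by
        intro a b hab
        rw [hι_apply, hι_apply] at hab
        exact B.equivFun.symm.injective (Subtype.coe_injective hab)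
      have hι_mem : ∀ y, ι y ∈ K := fun y => by
        rw [hι_apply]; exact (B.equivFun.symm y).2
      have hι_surj : ∀ x ∈ K, ∃ y, ι y = x := by
        intro x hx
        exact ⟨B.equivFun ⟨x, hx⟩, by rw [hι_apply, LinearEquiv.symm_apply_apply]⟩
      have hι_single : ∀ (x : Fin (m + 1) → ℂ) (jj : Fin (m + 2)),
          ι x jj = ∑ i, ι (Pi.single i 1) jj * x i := by
        intro x jj
        have hx : x = ∑ i, x i • (Pi.single i 1 : Fin (m + 1) → ℂ) := by
          funext k
          rw [Finset.sum_apply]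
          simp [Pi.single_apply]
        calc ι x jj = ι (∑ i, x i • (Pi.single i 1 : Fin (m + 1) → ℂ)) jj := by rw [← hx]
          _ = (∑ i, x i • ι (Pi.single i 1)) jj := by rw [map_sum]; simp
          _ = ∑ i, ι (Pi.single i 1) jj * x i := by
              rw [Finset.sum_apply]
              exact Finset.sum_congr rfl fun i _ => by simp [mul_comm]
      have hdot : ∀ (w : Fin (m + 2) → ℂ) (x : Fin (m + 1) → ℂ),
          ∑ jj, w jj * ι x jj = ∑ i, (∑ jj, w jj * ι (Pi.single i 1) jj) * x i := by
        intro w x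
        calc ∑ jj, w jj * ι x jj
            = ∑ jj, ∑ i, w jj * (ι (Pi.single i 1) jj * x i) := by
              refine Finset.sum_congr rfl fun jj _ => ?_
              rw [hι_single x jj, Finset.mul_sum]
          _ = ∑ i, ∑ jj, w jj * (ι (Pi.single i 1) jj * x i) := Finset.sum_comm
          _ = ∑ i, (∑ jj, w jj * ι (Pi.single i 1) jj) * x i := by
              refine Finset.sum_congr rfl fun i _ => ?_
              rw [Finset.sum_mul]
              exact Finset.sum_congr rfl fun jj _ => by ring
      set g : Fin (m + 2) → MvPolynomial (Fin (m + 1)) ℂ :=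
        fun jj => linForm (fun i => ι (Pi.single i 1) jj) with hg
      set h' : Fin (δ' + 1 + m) → Fin (m + 1) → ℂ :=
        fun i k => ∑ jj, h i.succ jj * ι (Pi.single k 1) jj with hh'
      have hevalg : ∀ (x : Fin (m + 1) → ℂ) jj, MvPolynomial.eval x (g jj) = ι x jj := by
        intro x jj
        rw [hg]
        rw [eval_linForm, hι_single x jj]
      have hevalh' : ∀ (x : Fin (m + 1) → ℂ) (i : Fin (δ' + 1 + m)),
          MvPolynomial.eval x (linForm (h' i)) = ∑ jj, h i.succ jj * ι x jj := by
        intro x i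
        rw [eval_linForm, hdot (h i.succ) x]
      set P' := aeval g P with hP'def
      have hP'hom : P'.IsHomogeneous (d + 1) := by
        simpa [hP'def, aeval_eq_bind₁] using hP.aeval g fun jj => linForm_isHomogeneous _
      have hevalP' : ∀ x, MvPolynomial.eval x P' = MvPolynomial.eval (ι x) P := by
        intro x
        rw [hP'def, eval_aeval']
        have e0 : (fun jj => MvPolynomial.eval x (g jj)) = ι x := funext (hevalg x)
        rw [e0]
      have hgen' : ∀ T' : Finset (Fin (δ' + 1 + m)), T'.card = m + 1 →
          LinearIndependent ℂ (fun i : T' => h' i) := by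
        intro T' hT'card
        rw [Fintype.linearIndependent_iff]
        intro a ha
        set A : Fin (δ' + 1 + m) → ℂ := fun i => if hi : i ∈ T' then a ⟨i, hi⟩ else 0 with hA
        have hAsum : ∑ i, A i • h' i = 0 := by
          have e1 : ∑ i ∈ T', A i • h' i = ∑ i, A i • h' i :=
            Finset.sum_subset (Finset.subset_univ T')
              (fun i _ hiT => by simp [hA, dif_neg hiT])
          rw [← e1, ← Finset.sum_attach T' (fun i => A i • h' i)]
          have e2 : ∑ i ∈ T'.attach, A i.1 • h' i.1 = ∑ i ∈ T'.attach, a i • h' i.1 :=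
            Finset.sum_congr rfl fun i _ => by rw [hA]; simp [dif_pos i.2]
          rw [e2, ← Finset.univ_eq_attach]
          exact ha
        set w : Fin (m + 2) → ℂ := fun jj => ∑ i, A i * h i.succ jj with hw
        have hwdot : ∀ x : Fin (m + 2) → ℂ, (∑ j, h 0 j * x j) = 0 →
            ∑ j, w j * x j = 0 := by
          intro x hker
          have hxK : x ∈ K := by
            rw [hK, LinearMap.mem_ker, hf0x]
            rw [← hker]
            exact Finset.sum_congr rfl fun j _ => mul_comm _ _
          obtain ⟨y, rfl⟩ := hι_surj x hxK
          rw [hdot w y]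
          apply Finset.sum_eq_zero
          intro k _
          have e3 : ∑ jj, w jj * ι (Pi.single k 1) jj = ∑ i, A i * h' i k := by
            calc ∑ jj, w jj * ι (Pi.single k 1) jj
                = ∑ jj, ∑ i, A i * h i.succ jj * ι (Pi.single k 1) jj := by
                  refine Finset.sum_congr rfl fun jj _ => ?_
                  rw [hw, Finset.sum_mul]
              _ = ∑ i, ∑ jj, A i * h i.succ jj * ι (Pi.single k 1) jj := Finset.sum_comm
              _ = ∑ i, A i * h' i k := by
                  refine Finset.sum_congr rfl fun i _ => ?_
                  rw [hh', Finset.mul_sum]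
                  exact Finset.sum_congr rfl fun jj _ => by ring
          rw [e3]
          have e4 := congrFun hAsum k
          simp only [Finset.sum_apply, Pi.smul_apply, smul_eq_mul, Pi.zero_apply] at e4
          rw [e4, zero_mul]
        obtain ⟨lam, hlam⟩ := exists_smul_of_dot_ker (h 0) w j0 hj0 hwdot
        set G : Fin (δ' + 1 + (m + 1)) → ℂ := Fin.cases (-lam) A with hG
        have hGs : ∀ i : Fin (δ' + 1 + m), G i.succ = A i := fun i => by
          rw [hG]; exact Fin.cases_succ _
        have hGz : G 0 = -lam := by rw [hG]; exact Fin.cases_zero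
        have hGsum : ∑ jj, G jj • h jj = 0 := by
          have hsplit0 : ∑ jj, G jj • h jj
              = G 0 • h 0 + ∑ i : Fin (δ' + 1 + m), G i.succ • h i.succ :=
            Fin.sum_univ_succ _
          rw [hsplit0, hGz]
          have e5 : ∑ i : Fin (δ' + 1 + m), G i.succ • h i.succ
              = ∑ i : Fin (δ' + 1 + m), A i • h i.succ :=
            Finset.sum_congr rfl fun i _ => by rw [hGs i]
          have e6 : (∑ i : Fin (δ' + 1 + m), A i • h i.succ) = w := by
            funext jj
            rw [Finset.sum_apply, hw]
            exact Finset.sum_congr rfl fun i _ => rfl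
          rw [e5, e6, hlam]
          module
        set TT := insert (0 : Fin (δ' + 1 + (m + 1))) (T'.map (Fin.succEmb _)) with hTT
        have hTTcard : TT.card = m + 2 := by
          rw [hTT, Finset.card_insert_of_notMem, Finset.card_map, hT'card]
          intro hmem
          obtain ⟨i, -, hie⟩ := Finset.mem_map.mp hmem
          exact Fin.succ_ne_zero i hie
        have hGout : ∀ jj, jj ∉ TT → G jj = 0 := by
          intro jj hjj
          rcases Fin.eq_zero_or_eq_succ jj with rfl | ⟨i, rfl⟩
          · exact absurd (Finset.mem_insert_self _ _) (hTT ▸ hjj)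
          · have hiT' : i ∉ T' := fun hi =>
              hjj (hTT ▸ Finset.mem_insert_of_mem (Finset.mem_map_of_mem _ hi))
            rw [hGs i, hA]
            simp [dif_neg hiT']
        have e8 := Fintype.linearIndependent_iff.mp (hgen TT hTTcard) (fun i => G i.1)
          (by
            have e7 : ∑ i ∈ TT.attach, G i.1 • h i.1 = 0 := by
              rw [Finset.sum_attach TT (fun jj => G jj • h jj)]
              rw [Finset.sum_subset (Finset.subset_univ TT)
                (fun jj _ hjj => by rw [hGout jj hjj, zero_smul])]
              exact hGsum
            refine Eq.trans ?_ e7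
            exact Finset.sum_congr (Finset.univ_eq_attach TT) fun _ _ => rfl)
        intro i0
        have hmem : ((i0 : Fin (δ' + 1 + m)).succ) ∈ TT :=
          hTT ▸ Finset.mem_insert_of_mem (Finset.mem_map_of_mem _ i0.2)
        have e9 : A (i0 : Fin (δ' + 1 + m)) = a i0 := by
          simp only [hA]
          rw [dif_pos i0.2]
        rw [← e9, ← hGs]
        exact e8 ⟨_, hmem⟩
      have hvan' : ∀ x : Fin (m + 1) → ℂ, x ≠ 0 →
          (∃ L : Finset (Fin (δ' + 1 + m)), L.card = m ∧
            ∀ i ∈ L, MvPolynomial.eval x (linForm (h' i)) = 0) →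
          MvPolynomial.eval x P' = 0 := by
        rintro x hx ⟨L', hL'card, hL'⟩
        rw [hevalP' x]
        have hιx : ι x ≠ 0 := fun hc => hx (hι_inj (by rw [hc, map_zero]))
        apply hvan (ι x) hιx
        refine ⟨insert 0 (L'.map (Fin.succEmb _)), ?_, ?_⟩
        · rw [Finset.card_insert_of_notMem, Finset.card_map, hL'card]
          intro hmem
          obtain ⟨i, -, hie⟩ := Finset.mem_map.mp hmem
          exact Fin.succ_ne_zero i hie
        · intro i hi
          rcases Finset.mem_insert.mp hi with rfl | hmem
          · rw [eval_linForm]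
            have hxk := hι_mem x
            rw [hK, LinearMap.mem_ker, hf0x] at hxk
            rw [← hxk]
            exact Finset.sum_congr rfl fun j _ => mul_comm _ _
          · obtain ⟨i', hi', rfl⟩ := Finset.mem_map.mp hmem
            have := hL' i' hi'
            rw [hevalh' x i'] at this
            rw [eval_linForm]
            exact this
      have hP'0 : P' = 0 := ihn (δ' + 1) hdδ h' hgen' P' hP'hom hvan'
      have hplane : ∀ x : Fin (m + 2) → ℂ, (∑ i, h 0 i * x i) = 0 →
          MvPolynomial.eval x P = 0 := by
        intro x hker
        have hxK : x ∈ K := by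
          rw [hK, LinearMap.mem_ker, hf0x]
          rw [← hker]
          exact Finset.sum_congr rfl fun j _ => mul_comm _ _
        obtain ⟨y, rfl⟩ := hι_surj x hxK
        rw [← hevalP' y, hP'0, map_zero]
      obtain ⟨Q, hQhom, hPQ⟩ := factor_out_linForm (h 0) j0 hj0 d P hP hplane
      have e : δ' + (m + 1) = δ' + 1 + m := by omega
      set emb : Fin (δ' + (m + 1)) ↪ Fin (δ' + 1 + (m + 1)) :=
        ⟨fun i => (Fin.cast e i).succ, fun a b hab => by
          have h1 := Fin.succ_injective _ hab
          have h2 := congrArg Fin.val h1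
          exact Fin.ext h2⟩ with hemb
      have hembne : ∀ i, emb i ≠ 0 := fun i => by
        simp only [hemb, Function.Embedding.coeFn_mk]
        exact Fin.succ_ne_zero (Fin.cast e i)
      set h₂ : Fin (δ' + (m + 1)) → Fin (m + 2) → ℂ := fun i => h (emb i) with hh₂
      have hgen₂ : ∀ T : Finset (Fin (δ' + (m + 1))), T.card = m + 2 →
          LinearIndependent ℂ (fun i : T => h₂ i) := by
        intro T hTc
        have hli := hgen (T.map emb) (by rw [Finset.card_map]; exact hTc)
        have hinj : Function.Injective (fun i : {x // x ∈ T} =>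
            (⟨emb i.1, Finset.mem_map_of_mem emb i.2⟩ : {x // x ∈ T.map emb})) := by
          intro a b hab
          have h1 : emb a.1 = emb b.1 := congrArg Subtype.val hab
          exact Subtype.ext (emb.injective h1)
        exact hli.comp _ hinj
      have hvan₂ : ∀ x : Fin (m + 2) → ℂ, x ≠ 0 →
          (∃ L : Finset (Fin (δ' + (m + 1))), L.card = m + 1 ∧
            ∀ i ∈ L, MvPolynomial.eval x (linForm (h₂ i)) = 0) →
          MvPolynomial.eval x Q = 0 := by
        rintro x hx ⟨L, hLc, hLv⟩
        have hPx := hvan x hx ⟨L.map emb, by rw [Finset.card_map, hLc], fun i hi => by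
          obtain ⟨i', hi', rfl⟩ := Finset.mem_map.mp hi
          exact hLv i' hi'⟩
        rw [hPQ, map_mul] at hPx
        rcases mul_eq_zero.mp hPx with h1 | h2
        · exfalso
          rw [eval_linForm] at h1
          apply hx
          have hcard2 : (insert (0 : Fin (δ' + 1 + (m + 1))) (L.map emb)).card = m + 2 := by
            rw [Finset.card_insert_of_notMem, Finset.card_map, hLc]
            intro hmem
            obtain ⟨i, -, hie⟩ := Finset.mem_map.mp hmem
            exact hembne i hie
          refine eq_zero_of_forall_dot h _ hcard2 (hgen _ hcard2) x ?_
          intro i hi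
          rcases Finset.mem_insert.mp hi with rfl | hmem
          · exact h1
          · obtain ⟨i', hi', rfl⟩ := Finset.mem_map.mp hmem
            have := hLv i' hi'
            rw [eval_linForm] at this
            exact this
        · exact h2
      have hQ0 : Q = 0 := ih (m + 1) δ' (by omega) h₂ hgen₂ Q hQhom hvan₂
      rw [hPQ, hQ0, mul_zero]

/-- Let `Z ⊂ ℙ^n` be the set of `C(δ+n, n)` points obtained as the `n`-fold intersection
points of `δ+n` general hyperplanes (with equations `h_1, …, h_{δ+n}`, any `n+1` of them
linearly independent), `δ ≥ 1`.  Then there is no nonzero homogeneous polynomial of degree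
`d ≤ δ` vanishing on all of `Z`, i.e. `H^0(I_Z(d)) = 0` for `d ≤ δ`. -/
theorem no_low_degree_through_points (n δ d : ℕ) (hδ : 1 ≤ δ) (hd : d ≤ δ)
    (h : Fin (δ + n) → (Fin (n + 1) → ℂ))
    (hgen : ∀ T : Finset (Fin (δ + n)), T.card = n + 1 →
      LinearIndependent ℂ (fun i : T => h i))
    (P : MvPolynomial (Fin (n + 1)) ℂ)
    (hP : P ∈ MvPolynomial.homogeneousSubmodule (Fin (n + 1)) ℂ d)
    (hvan : ∀ x : Fin (n + 1) → ℂ, x ≠ 0 →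
      (∃ L : Finset (Fin (δ + n)), L.card = n ∧
        ∀ i ∈ L, MvPolynomial.eval x (linForm (h i)) = 0) →
      MvPolynomial.eval x P = 0) :
    P = 0 := by
  exact key_lemma d n δ hd h hgen P
    ((MvPolynomial.mem_homogeneousSubmodule _ _).mp hP) hvan
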